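/- Let A be a finite-dimensional algebra over a field k and T an algebra endomorphism or anti-endomorphism of A. If a, a', b, b' ∈ A satisfy a' ∈ a + J(A) and b' ∈ b + J(A), then Tr(l(a) ∘ r(b) ∘ T) = Tr(l(a') ∘ r(b') ∘ T), where Tr denotes the trace of a k-linear endomorphism of A. -/

import Mathlib

open LinearMap

/-- Noncommutative Nakayama: a f.g. submodule `N` with `N ≤ J(R) • N` is trivial. -/
theorem nakayama_jacobson_bot {R M : Type*} [Ring R] [AddCommGroup M] [Module R M]
    (N : Submodule R M) (hFG : N.FG)
    (hle : N ≤ (Ideal.jacobson (⊥ : Ideal R)) • N) : N = ⊥ := by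
  classical
  obtain ⟨s, hs⟩ := hFG
  induction s using Finset.induction_on generalizing N with
  | empty =>
      simpa using hs.symm
  | @insert x t hx IH =>
      set J := Ideal.jacobson (⊥ : Ideal R) with hJ
      have hJr : ∀ {u y : R}, u ∈ J → u * y ∈ J := by
        intro u y hu
        exact J.mul_mem_right y hu
      -- the submodule {c • x | c ∈ J}
      let Jx : Submodule R M :=
        { carrier := {m | ∃ c ∈ J, m = c • x}
          add_mem' := by
            rintro m₁ m₂ ⟨c₁, hc₁, rfl⟩ ⟨c₂, hc₂, rfl⟩
            exact ⟨c₁ + c₂, J.add_mem hc₁ hc₂, (add_smul c₁ c₂ x).symm⟩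
          zero_mem' := ⟨0, J.zero_mem, (zero_smul R x).symm⟩
          smul_mem' := by
            rintro r m ⟨c, hc, rfl⟩
            exact ⟨r * c, Ideal.mul_mem_left J r hc, (mul_smul r c x).symm⟩ }
      have hsmul_le : J • N ≤ Jx ⊔ Submodule.span R (t : Set M) := by
        refine Submodule.smul_le.2 ?_
        intro c hc n hn
        rw [← hs, Finset.coe_insert, Submodule.span_insert] at hn
        obtain ⟨n₁, hn₁, n₂, hn₂, rfl⟩ := Submodule.mem_sup.1 hn
        obtain ⟨r, rfl⟩ := Submodule.mem_span_singleton.1 hn₁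
        rw [smul_add]
        refine Submodule.add_mem _ (Submodule.mem_sup_left ?_) (Submodule.mem_sup_right ?_)
        · exact ⟨c * r, hJr hc, (mul_smul c r x).symm⟩
        · exact Submodule.smul_mem _ c hn₂
      have hxN : x ∈ N := by
        rw [← hs]; exact Submodule.subset_span (by simp)
      have hxmem := hsmul_le (hle hxN)
      obtain ⟨m₁, ⟨c, hc, rfl⟩, w, hw, hxw⟩ := Submodule.mem_sup.1 hxmem
      -- get left inverse of 1 - c
      obtain ⟨z, hz⟩ := (Ideal.mem_jacobson_iff.1 hc) (-1)
      rw [Ideal.mem_bot] at hz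
      have hz1 : z * (1 - c) = 1 := by
        have : z * -1 * c + z - 1 = 0 := hz
        rw [mul_sub, mul_one]
        linear_combination (norm := noncomm_ring) this
      have hxspan : x ∈ Submodule.span R (t : Set M) := by
        have hxsub : (1 - c) • x = w := by
          rw [sub_smul, one_smul]
          rw [eq_comm, ← sub_eq_iff_eq_add'] at hxw
          exact hxw.symm ▸ rfl
        have : x = z • w := by
          rw [← hxsub, ← mul_smul, hz1, one_smul]
        rw [this]
        exact Submodule.smul_mem _ z hw
      refine IH N hle ?_
      rw [← hs]
      refine le_antisymm (Submodule.span_mono (by simp)) ?_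
      rw [Finset.coe_insert, Submodule.span_insert]
      refine sup_le ?_ le_rfl
      rw [Submodule.span_le, Set.singleton_subset_iff]
      exact hxspan

/-- In a finite-dimensional algebra over a field, products of enough elements of the
Jacobson radical vanish. -/
theorem jacobson_prod_eq_zero (k R : Type*) [Field k] [Ring R] [Algebra k R]
    [FiniteDimensional k R] :
    ∃ n : ℕ, ∀ l : List R, (∀ x ∈ l, x ∈ Ideal.jacobson (⊥ : Ideal R)) →
      n ≤ l.length → l.prod = 0 := by
  haveI : IsArtinianRing R := IsArtinianRing.of_finite k R
  haveI : IsNoetherian R R := isNoetherian_of_tower k inferInstance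
  set J := Ideal.jacobson (⊥ : Ideal R) with hJ
  set P : ℕ → Submodule R R := fun m => (fun N => J • N)^[m] ⊤ with hP
  have hPsucc : ∀ m, P (m + 1) = J • P m := by
    intro m
    simp only [hP, Function.iterate_succ_apply']
  have hPanti : ∀ ⦃a b : ℕ⦄, a ≤ b → P b ≤ P a := by
    have h1 : ∀ m, P (m + 1) ≤ P m := by
      intro m
      induction m with
      | zero => rw [hPsucc]; exact Submodule.smul_le_right
      | succ m ih =>
          calc P (m + 1 + 1) = J • P (m + 1) := hPsucc (m + 1)
            _ ≤ J • P m := Submodule.smul_mono le_rfl ih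
            _ = P (m + 1) := (hPsucc m).symm
    exact antitone_nat_of_succ_le h1
  obtain ⟨n, hn⟩ := IsArtinian.monotone_stabilizes
    (⟨fun m => OrderDual.toDual (P m), fun a b hab => hPanti hab⟩ : ℕ →o (Submodule R R)ᵒᵈ)
  have hPn : P n = ⊥ := by
    refine nakayama_jacobson_bot (P n) (IsNoetherian.noetherian _) ?_
    have : P n = P (n + 1) := hn (n + 1) (Nat.le_succ n)
    rw [← hJ, ← hPsucc n, ← this]
  refine ⟨n, ?_⟩
  have hmem : ∀ l : List R, (∀ x ∈ l, x ∈ J) → l.prod ∈ P l.length := by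
    intro l
    induction l with
    | nil => simp [hP]
    | cons x t ih =>
        intro hl
        rw [List.prod_cons, List.length_cons, hPsucc]
        have : x * t.prod = x • t.prod := rfl
        rw [this]
        exact Submodule.smul_mem_smul (hl x (by simp)) (ih fun y hy => hl y (by simp [hy]))
  intro l hl hlen
  have := hPanti hlen (hmem l hl)
  rw [hPn] at this
  simpa using this

section
variable {k A : Type*} [Field k] [Ring A] [Algebra k A] [FiniteDimensional k A]

theorem aux_trace_zero (T : A →ₗ[k] A)
    (hT : (∀ u v : A, T (u * v) = T u * T v) ∨ (∀ u v : A, T (u * v) = T v * T u))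
    (p q : A)
    (hpq : p ∈ Ideal.jacobson (⊥ : Ideal A) ∨ q ∈ Ideal.jacobson (⊥ : Ideal A)) :
    LinearMap.trace k A ((LinearMap.mulLeft k p) ∘ₗ (LinearMap.mulRight k q) ∘ₗ T) = 0 := by
  classical
  set J := Ideal.jacobson (⊥ : Ideal A) with hJdef
  have hJr : ∀ {u y : A}, u ∈ J → u * y ∈ J := by
    intro u y hu
    exact J.mul_mem_right y hu
  have hJl : ∀ {u y : A}, u ∈ J → y * u ∈ J := fun {u y} hu => Ideal.mul_mem_left J y hu
  -- the square of T, an algebra endomorphism in both cases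
  set E : A →ₗ[k] A := T ∘ₗ T with hEdef
  have hEapp : ∀ v : A, E v = T (T v) := fun _ => rfl
  have hE : ∀ u v : A, E (u * v) = E u * E v := by
    rcases hT with hT | hT <;> intro u v <;> simp [hEapp, hT]
  have hEpow : ∀ (m : ℕ) (u v : A), (E ^ m) (u * v) = (E ^ m) u * (E ^ m) v := by
    intro m
    induction m with
    | zero => intro u v; simp
    | succ m ih =>
        intro u v
        rw [pow_succ, Module.End.mul_apply, Module.End.mul_apply, Module.End.mul_apply, hE, ih]
  have hTcomm : ∀ (m : ℕ) (a : A), T ((E ^ m) a) = (E ^ m) (T a) := by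
    intro m a
    have hc : Commute T (E ^ m) :=
      (((Commute.refl T).mul_right (Commute.refl T)).pow_right m)
    have := LinearMap.congr_fun hc.eq a
    simpa [Module.End.mul_apply] using this
  have hEsuc : ∀ (m : ℕ) (v : A), (E ^ (m + 1)) v = (E ^ m) (E v) := by
    intro m v; rw [pow_succ, Module.End.mul_apply]
  -- stabilization of the images of E ^ m
  haveI : IsArtinian k A := inferInstance
  set rng : ℕ → Submodule k A := fun m => LinearMap.range (E ^ m) with hrngdef
  have hrnganti : ∀ ⦃a b : ℕ⦄, a ≤ b → rng b ≤ rng a := by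
    refine antitone_nat_of_succ_le ?_
    rintro m _ ⟨a, rfl⟩
    exact ⟨E a, (hEsuc m a).symm⟩
  obtain ⟨r, hr⟩ := IsArtinian.monotone_stabilizes
    (⟨fun m => OrderDual.toDual (rng m), fun a b hab => hrnganti hab⟩ : ℕ →o (Submodule k A)ᵒᵈ)
  have hr' : ∀ m, r ≤ m → rng r = rng m := fun m hm => hr m hm
  -- the stable subalgebra S = k•1 + E^r(A)
  set V : Submodule k A := Submodule.span k {(1 : A)} ⊔ rng r with hVdef
  have hVmem : ∀ w ∈ V, ∃ (α : k) (u : A), w = α • (1 : A) + (E ^ r) u := by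
    intro w hw
    obtain ⟨w₁, hw₁, w₂, hw₂, rfl⟩ := Submodule.mem_sup.1 hw
    obtain ⟨α, rfl⟩ := Submodule.mem_span_singleton.1 hw₁
    obtain ⟨u, rfl⟩ := hw₂
    exact ⟨α, u, rfl⟩
  have hV1 : (1 : A) ∈ V := Submodule.mem_sup_left (Submodule.mem_span_singleton_self 1)
  have hVrng : ∀ (u : A), (E ^ r) u ∈ V := fun u => Submodule.mem_sup_right ⟨u, rfl⟩
  have hVmul : ∀ (x y : A), x ∈ V → y ∈ V → x * y ∈ V := by
    intro x y hx hy
    obtain ⟨α, u, rfl⟩ := hVmem x hx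
    obtain ⟨β, v, rfl⟩ := hVmem y hy
    have expand : (α • (1 : A) + (E ^ r) u) * (β • (1 : A) + (E ^ r) v) =
        (β * α) • (1 : A) + (E ^ r) (α • v + β • u + u * v) := by
      simp only [map_add, map_smul, hEpow]
      rw [add_mul, mul_add, mul_add]
      simp [smul_mul_assoc, mul_smul_comm, smul_smul, add_comm, add_left_comm, add_assoc]
    rw [expand]
    exact V.add_mem (Submodule.mem_sup_left
      (Submodule.smul_mem _ _ (Submodule.mem_span_singleton_self 1))) (hVrng _)
  set S : Subalgebra k A := V.toSubalgebra hV1 hVmul with hSdef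
  have hmemS : ∀ (m : ℕ), r ≤ m → ∀ (a : A), (E ^ m) a ∈ S := by
    intro m hm a
    have : (E ^ m) a ∈ rng m := ⟨a, rfl⟩
    rw [← hr' m hm] at this
    exact Submodule.mem_toSubalgebra.2 (Submodule.mem_sup_right this)
  obtain ⟨nA, hnA⟩ := jacobson_prod_eq_zero k A
  obtain ⟨nS, hnS⟩ := jacobson_prod_eq_zero k ↥S
  -- elements E^m(j) with j ∈ J(A) and m ≥ r lie in the Jacobson radical of S
  have key : ∀ (m : ℕ) (hm : r ≤ m) (j : A) (_ : j ∈ J),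
      (⟨(E ^ m) j, hmemS m hm j⟩ : ↥S) ∈ Ideal.jacobson (⊥ : Ideal ↥S) := by
    intro m hm j hj
    rw [Ideal.mem_jacobson_iff]
    intro y
    set x : ↥S := ⟨(E ^ m) j, hmemS m hm j⟩ with hxdef
    -- write y as α•1 + E^m(u')
    have hy : (y : A) ∈ V := y.2
    obtain ⟨α, u, hyu⟩ := hVmem _ hy
    have hrmem : (E ^ r) u ∈ rng m := by rw [← hr' m hm]; exact ⟨u, rfl⟩
    obtain ⟨u', hu'⟩ := hrmem
    -- the product y * x is E^m of an element of J
    set j' : A := α • j + u' * j with hj'def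
    have hj' : j' ∈ J := by
      refine J.add_mem ?_ (hJl hj)
      rw [← algebraMap_smul A α j]
      exact J.smul_mem _ hj
    have hyx : ((y * x : ↥S) : A) = (E ^ m) j' := by
      have : ((y * x : ↥S) : A) = (y : A) * ((E ^ m) j) := rfl
      rw [this, hyu, ← hu', hj'def, map_add, map_smul, hEpow, add_mul, smul_mul_assoc,
        one_mul]
    -- y * x is nilpotent
    have hjpow : j' ^ (nA + 1) = 0 := by
      have := hnA (List.replicate (nA + 1) j')
        (by intro z hz; rw [List.eq_of_mem_replicate hz]; exact hj')
        (by simp)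
      simpa [List.prod_replicate] using this
    have hEn : ∀ (c : A) (n : ℕ), ((E ^ m) c) ^ (n + 1) = (E ^ m) (c ^ (n + 1)) := by
      intro c n
      induction n with
      | zero => simp
      | succ n ih => rw [pow_succ, ih, ← hEpow, ← pow_succ]
    have hnil : IsNilpotent (y * x) := by
      refine ⟨nA + 1, ?_⟩
      have : (((y * x) ^ (nA + 1) : ↥S) : A) = 0 := by
        rw [SubmonoidClass.coe_pow, hyx, hEn, hjpow, map_zero]
      exact Subtype.ext this
    obtain ⟨w, hw⟩ := IsNilpotent.isUnit_one_add hnil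
    refine ⟨(↑w⁻¹ : ↥S), ?_⟩
    rw [Ideal.mem_bot]
    have : (↑w⁻¹ : ↥S) * y * x + ↑w⁻¹ = (↑w⁻¹ : ↥S) * (1 + y * x) := by
      noncomm_ring
    rw [this, ← hw, Units.inv_mul, sub_self]
  -- a single trace-cycling step
  have single : ∀ (w x w' x' : A),
      (T ∘ₗ (mulLeft k w ∘ₗ mulRight k x) = (mulLeft k w' ∘ₗ mulRight k x') ∘ₗ T) →
      LinearMap.trace k A (mulLeft k w ∘ₗ mulRight k x ∘ₗ T) =
        LinearMap.trace k A (mulLeft k w' ∘ₗ mulRight k x' ∘ₗ T) := by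
    intro w x w' x' h
    have h1 : mulLeft k w ∘ₗ mulRight k x ∘ₗ T = (mulLeft k w ∘ₗ mulRight k x) ∘ₗ T := by
      rw [LinearMap.comp_assoc]
    have h2 : (mulLeft k w' ∘ₗ mulRight k x') ∘ₗ T = mulLeft k w' ∘ₗ mulRight k x' ∘ₗ T := by
      rw [LinearMap.comp_assoc]
    rw [h1, LinearMap.trace_comp_comm' T (mulLeft k w ∘ₗ mulRight k x), h, h2]
  have keystep : ∀ (w x : A),
      LinearMap.trace k A (mulLeft k w ∘ₗ mulRight k x ∘ₗ T) =
        LinearMap.trace k A (mulLeft k (E w) ∘ₗ mulRight k (E x) ∘ₗ T) := by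
    rcases hT with hT1 | hT1
    · have op : ∀ (w x : A),
          T ∘ₗ (mulLeft k w ∘ₗ mulRight k x) = (mulLeft k (T w) ∘ₗ mulRight k (T x)) ∘ₗ T := by
        intro w x; ext v
        simp [hT1, mul_assoc]
      intro w x
      rw [hEapp, hEapp]
      exact (single w x (T w) (T x) (op w x)).trans
        (single (T w) (T x) (T (T w)) (T (T x)) (op (T w) (T x)))
    · have op : ∀ (w x : A),
          T ∘ₗ (mulLeft k w ∘ₗ mulRight k x) = (mulLeft k (T x) ∘ₗ mulRight k (T w)) ∘ₗ T := by
        intro w x; ext v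
        simp [hT1, mul_assoc]
      intro w x
      rw [hEapp, hEapp]
      exact (single w x (T x) (T w) (op w x)).trans
        (single (T x) (T w) (T (T w)) (T (T x)) (op (T x) (T w)))
  have hEsuc' : ∀ (m : ℕ) (v : A), (E ^ (m + 1)) v = E ((E ^ m) v) := by
    intro m v; rw [pow_succ', Module.End.mul_apply]
  have hiter : ∀ (m : ℕ) (w x : A),
      LinearMap.trace k A (mulLeft k w ∘ₗ mulRight k x ∘ₗ T) =
        LinearMap.trace k A (mulLeft k ((E ^ m) w) ∘ₗ mulRight k ((E ^ m) x) ∘ₗ T) := by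
    intro m
    induction m with
    | zero => intro w x; simp
    | succ m ih =>
        intro w x
        rw [ih w x, keystep ((E ^ m) w) ((E ^ m) x), ← hEsuc' m w, ← hEsuc' m x]
  -- the endgame: nilpotency of the operator
  have endgame : ∀ (p' q' c₁ d₁ j₀ : A), j₀ ∈ J →
      (c₁ = (E ^ r) j₀ ∨ d₁ = (E ^ r) j₀) →
      (∀ v, p' * (T (p' * (T v * q')) * q') = c₁ * (E v * d₁)) →
      LinearMap.trace k A (mulLeft k p' ∘ₗ mulRight k q' ∘ₗ T) = 0 := by
    intro p' q' c₁ d₁ j₀ hj₀ hcase hM2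
    set M : A →ₗ[k] A := mulLeft k p' ∘ₗ mulRight k q' ∘ₗ T with hMdef
    have hMv : ∀ v, M v = p' * (T v * q') := fun v => rfl
    have hM2' : ∀ v, (M * M) v = c₁ * (E v * d₁) := by
      intro v
      rw [Module.End.mul_apply, hMv, hMv]
      exact hM2 v
    let c : ℕ → A := fun m => Nat.rec c₁ (fun n cn => cn * (E ^ (n + 1)) c₁) m
    let d : ℕ → A := fun m => Nat.rec d₁ (fun n dn => (E ^ (n + 1)) d₁ * dn) m
    have hc0 : c 0 = c₁ := rfl
    have hcs : ∀ m, c (m + 1) = c m * (E ^ (m + 1)) c₁ := fun m => rfl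
    have hd0 : d 0 = d₁ := rfl
    have hds : ∀ m, d (m + 1) = (E ^ (m + 1)) d₁ * d m := fun m => rfl
    have hMpow : ∀ (m : ℕ) (v : A), (M ^ (2 * m + 2)) v = c m * ((E ^ (m + 1)) v * d m) := by
      intro m
      induction m with
      | zero =>
          intro v
          have h2 : (2 * 0 + 2) = 2 := rfl
          rw [h2, pow_two, hM2' v, hc0, hd0]
          simp [pow_one]
      | succ m ih =>
          intro v
          have harith : 2 * (m + 1) + 2 = (2 * m + 2) + 2 := by ring
          rw [harith, pow_add, Module.End.mul_apply, pow_two, hM2' v, ih, hEpow (m + 1),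
            hEpow (m + 1), hcs, hds, ← hEsuc (m + 1) v]
          simp [mul_assoc]
    let F : ℕ → ↥S := fun i => ⟨(E ^ (i + r)) j₀, hmemS (i + r) (Nat.le_add_left r i) j₀⟩
    have hF : ∀ i, F i ∈ Ideal.jacobson (⊥ : Ideal ↥S) :=
      fun i => key (i + r) (Nat.le_add_left r i) j₀ hj₀
    have hFc : ∀ i, ((F i : ↥S) : A) = (E ^ i) ((E ^ r) j₀) := by
      intro i
      show (E ^ (i + r)) j₀ = _
      rw [pow_add, Module.End.mul_apply]
    rcases hcase with hc1 | hd1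
    · -- c-side dies
      have hlist : ∀ m : ℕ, ∃ l : List ↥S, (∀ s ∈ l, s ∈ Ideal.jacobson (⊥ : Ideal ↥S)) ∧
          l.length = m + 1 ∧ c m = ((l.prod : ↥S) : A) := by
        intro m
        induction m with
        | zero =>
            refine ⟨[F 0], by simpa using hF 0, rfl, ?_⟩
            rw [hc0, hc1]
            simp [hFc]
        | succ m ih =>
            obtain ⟨l, hmem, hlen, hprod⟩ := ih
            refine ⟨l ++ [F (m + 1)], ?_, ?_, ?_⟩
            · intro s hs
              rcases List.mem_append.1 hs with h | h
              · exact hmem s h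
              · rw [List.mem_singleton.1 h]; exact hF _
            · simp [hlen]
            · rw [hcs, hprod, List.prod_append, List.prod_singleton]
              have h1 : (E ^ (m + 1)) c₁ = ((F (m + 1) : ↥S) : A) := by rw [hFc, hc1]
              rw [h1]
              rfl
      obtain ⟨l, hmem, hlen, hprod⟩ := hlist nS
      have hzero : l.prod = 0 := hnS l hmem (by rw [hlen]; omega)
      have hcnS : c nS = 0 := by rw [hprod, hzero]; simp
      have hMnil : IsNilpotent M := by
        refine ⟨2 * nS + 2, ?_⟩
        ext v
        rw [LinearMap.zero_apply, hMpow nS v, hcnS, zero_mul]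
      exact (LinearMap.isNilpotent_trace_of_isNilpotent hMnil).eq_zero
    · -- d-side dies
      have hlist : ∀ m : ℕ, ∃ l : List ↥S, (∀ s ∈ l, s ∈ Ideal.jacobson (⊥ : Ideal ↥S)) ∧
          l.length = m + 1 ∧ d m = ((l.prod : ↥S) : A) := by
        intro m
        induction m with
        | zero =>
            refine ⟨[F 0], by simpa using hF 0, rfl, ?_⟩
            rw [hd0, hd1]
            simp [hFc]
        | succ m ih =>
            obtain ⟨l, hmem, hlen, hprod⟩ := ih
            refine ⟨F (m + 1) :: l, ?_, ?_, ?_⟩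
            · intro s hs
              rcases List.mem_cons.1 hs with h | h
              · rw [h]; exact hF _
              · exact hmem s h
            · simp [hlen]
            · rw [hds, hprod, List.prod_cons]
              have h1 : (E ^ (m + 1)) d₁ = ((F (m + 1) : ↥S) : A) := by rw [hFc, hd1]
              rw [h1]
              rfl
      obtain ⟨l, hmem, hlen, hprod⟩ := hlist nS
      have hzero : l.prod = 0 := hnS l hmem (by rw [hlen]; omega)
      have hdnS : d nS = 0 := by rw [hprod, hzero]; simp
      have hMnil : IsNilpotent M := by
        refine ⟨2 * nS + 2, ?_⟩
        ext v
        rw [LinearMap.zero_apply, hMpow nS v, hdnS, mul_zero, mul_zero]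
      exact (LinearMap.isNilpotent_trace_of_isNilpotent hMnil).eq_zero
  -- put everything together
  rw [hiter r p q]
  rcases hT with hT1 | hT1
  · rcases hpq with hp | hq
    · refine endgame _ _ ((E ^ r) p * T ((E ^ r) p)) (T ((E ^ r) q) * (E ^ r) q) (p * T p)
        (hJr hp) (Or.inl ?_) ?_
      · rw [hTcomm r p, ← hEpow]
      · intro v
        simp [hT1, hEapp, mul_assoc]
    · refine endgame _ _ ((E ^ r) p * T ((E ^ r) p)) (T ((E ^ r) q) * (E ^ r) q) (T q * q)
        (hJl hq) (Or.inr ?_) ?_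
      · rw [hTcomm r q, ← hEpow]
      · intro v
        simp [hT1, hEapp, mul_assoc]
  · rcases hpq with hp | hq
    · refine endgame _ _ ((E ^ r) p * T ((E ^ r) q)) (T ((E ^ r) p) * (E ^ r) q) (p * T q)
        (hJr hp) (Or.inl ?_) ?_
      · rw [hTcomm r q, ← hEpow]
      · intro v
        simp [hT1, hEapp, mul_assoc]
    · refine endgame _ _ ((E ^ r) p * T ((E ^ r) q)) (T ((E ^ r) p) * (E ^ r) q) (T p * q)
        (hJl hq) (Or.inr ?_) ?_
      · rw [hTcomm r p, ← hEpow]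
      · intro v
        simp [hT1, hEapp, mul_assoc]

end

/-- Let `A` be a finite-dimensional algebra over a field `k` and `T` a `k`-linear map which is
either an algebra endomorphism or an algebra anti-endomorphism of `A`.  If `a' ∈ a + J(A)` and
`b' ∈ b + J(A)`, then `Tr(l(a) ∘ r(b) ∘ T) = Tr(l(a') ∘ r(b') ∘ T)`. -/
theorem trace_mulLeft_mulRight_congr_jacobson
    {k A : Type*} [Field k] [Ring A] [Algebra k A] [FiniteDimensional k A]
    (T : A →ₗ[k] A)
    (hT : (∀ u v : A, T (u * v) = T u * T v) ∨ (∀ u v : A, T (u * v) = T v * T u))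
    (a a' b b' : A)
    (ha : a' - a ∈ Ideal.jacobson (⊥ : Ideal A))
    (hb : b' - b ∈ Ideal.jacobson (⊥ : Ideal A)) :
    LinearMap.trace k A ((LinearMap.mulLeft k a) ∘ₗ (LinearMap.mulRight k b) ∘ₗ T) =
      LinearMap.trace k A ((LinearMap.mulLeft k a') ∘ₗ (LinearMap.mulRight k b') ∘ₗ T) := by
  have hsplitL : LinearMap.mulLeft k a' = LinearMap.mulLeft k a + LinearMap.mulLeft k (a' - a) := by
    ext v; simp [sub_mul]
  have hsplitR : LinearMap.mulRight k b' =
      LinearMap.mulRight k b + LinearMap.mulRight k (b' - b) := by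
    ext v; simp [mul_sub]
  rw [hsplitL, hsplitR]
  simp only [LinearMap.add_comp, LinearMap.comp_add, map_add]
  rw [aux_trace_zero T hT (a' - a) b (Or.inl ha),
    aux_trace_zero T hT a (b' - b) (Or.inr hb),
    aux_trace_zero T hT (a' - a) (b' - b) (Or.inl ha)]
  ring
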